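/- If a graph G has a Hamiltonian path and minimum degree at least 3, then G has the strong parity property. -/

import Mathlib

open SimpleGraph

/-- The degree of `v` in `H`, defined as the cardinality of its neighbor set. -/
noncomputable def edeg {V : Type*} (H : SimpleGraph V) (v : V) : ℕ := (H.neighborSet v).ncard

/-- A factor of `G`: a spanning subgraph with all degrees at least 1. -/
def IsFactor {V : Type*} (G H : SimpleGraph V) : Prop :=
  H ≤ G ∧ ∀ v, 1 ≤ edeg H v

/-- An `X`-parity-factor of `G`: a factor whose odd-degree vertices are exactly `X`. -/
def IsParityFactor {V : Type*} (G H : SimpleGraph V) (X : Set V) : Prop :=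
  IsFactor G H ∧ ∀ v, (Odd (edeg H v) ↔ v ∈ X)

/-- `G` has the strong parity property if every even-sized vertex subset
admits an `X`-parity-factor. -/
def StrongParity {V : Type*} (G : SimpleGraph V) : Prop :=
  ∀ X : Set V, Even X.ncard → ∃ H, IsParityFactor G H X

theorem hamiltonian_path_min_degree_three_strong_parity {V : Type*} [Fintype V]
    [DecidableEq V] (G : SimpleGraph V)
    (hham : ∃ (u v : V) (p : G.Walk u v), p.IsHamiltonian)
    (hδ : ∀ v, 3 ≤ edeg G v) :
    StrongParity G := by
  classical
  obtain ⟨u, w, p, hp⟩ := hham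
  intro X hX
  haveI : DecidableRel G.Adj := Classical.decRel _
  -- basic setup from the Hamiltonian path
  set L : List V := p.support with hLdef
  have hnd : L.Nodup := hp.isPath.support_nodup
  have hmemL : ∀ v : V, v ∈ L := fun v => hp.mem_support v
  have hchain : L.Chain' G.Adj := p.isChain_adj_support
  set n : ℕ := L.length with hn
  set idx : V → ℕ := fun v => L.idxOf v with hidxdef
  have hidx_lt : ∀ v : V, idx v < n := fun v => List.idxOf_lt_length_iff.2 (hmemL v)
  have hinj : ∀ a b : V, idx a = idx b → a = b := fun a b h =>
    (List.idxOf_inj (hmemL a)).1 h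
  have hidxget : ∀ (i : ℕ) (h : i < n), idx (L[i]'h) = i := fun i h =>
    List.Nodup.idxOf_getElem hnd i h
  have hgetcongr : ∀ (a b : ℕ) (hab : a = b) (ha : a < n), L[a]'ha = L[b]'(hab ▸ ha) := by
    intro a b hab ha; subst hab; rfl
  have hadj : ∀ (i j : ℕ) (hij : j = i + 1) (hi : i < n) (hj : j < n),
      G.Adj (L[i]'hi) (L[j]'hj) := by
    intro i j hij hi hj
    subst hij
    have := List.isChain_iff_getElem.1 hchain i (by omega)
    simpa [List.get_eq_getElem] using this
  -- edeg equals degree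
  have hedegG : ∀ v : V, edeg G v = G.degree v := fun v => by
    rw [edeg, SimpleGraph.degree, SimpleGraph.neighborFinset_def, ← Set.ncard_eq_toFinset_card']
  -- the "flip" set
  set Yp : V → Prop := fun v => ¬ (Odd (edeg G v) ↔ v ∈ X) with hYp
  set YF : Finset V := Finset.univ.filter Yp with hYF
  have hmemYF : ∀ v : V, v ∈ YF ↔ Yp v := by
    intro v; rw [hYF]; simp
  -- |YF| is even
  have hYeven : Even YF.card := by
    set A : Finset V := Finset.univ.filter (fun v => Odd (G.degree v)) with hA
    set B : Finset V := Finset.univ.filter (fun v => v ∈ X) with hB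
    have hAeven : Even A.card := G.even_card_odd_degree_vertices
    have hBeven : Even B.card := by
      have : X.ncard = B.card := by
        rw [Set.ncard_eq_toFinset_card']
        congr 1
        ext x
        simp [hB, Set.mem_toFinset]
      rwa [this] at hX
    have hYFeq : YF = (A \ B) ∪ (B \ A) := by
      ext x
      simp only [hYF, hA, hB, Finset.mem_union, Finset.mem_sdiff, Finset.mem_filter,
        Finset.mem_univ, true_and, hYp, hedegG]
      tauto
    have hdisj : Disjoint (A \ B) (B \ A) := by
      rw [Finset.disjoint_left]
      intro x hx hx'
      simp only [Finset.mem_sdiff] at hx hx'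
      exact hx.2 hx'.1
    have c1 := Finset.card_sdiff_add_card_inter A B
    have c2 := Finset.card_sdiff_add_card_inter B A
    have c3 : (A ∩ B).card = (B ∩ A).card := by rw [Finset.inter_comm]
    have c4 : YF.card = (A \ B).card + (B \ A).card := by
      rw [hYFeq, Finset.card_union_of_disjoint hdisj]
    rw [Nat.even_iff] at hAeven hBeven ⊢
    omega
  -- prefix counts
  set c : ℕ → ℕ := fun i => (YF.filter (fun y => idx y ≤ i)).card with hc
  have htop : c (n - 1) = YF.card := by
    rw [hc]
    simp only
    rw [Finset.filter_true_of_mem]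
    intro y _
    have := hidx_lt y
    omega
  -- the removed edges and the factor H
  set bad : V → V → Prop := fun a b =>
    (idx b = idx a + 1 ∧ Odd (c (idx a))) ∨ (idx a = idx b + 1 ∧ Odd (c (idx b))) with hbad
  have hbadsymm : ∀ a b : V, bad a b → bad b a := by
    intro a b h
    rw [hbad] at h ⊢
    tauto
  set H : SimpleGraph V :=
    { Adj := fun a b => G.Adj a b ∧ ¬ bad a b
      symm := by
        constructor
        intro a b hab
        exact ⟨hab.1.symm, fun hb => hab.2 (hbadsymm b a hb)⟩
      loopless := ⟨fun a ha => G.loopless.irrefl a ha.1⟩ } with hH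
  haveI : DecidableRel H.Adj := Classical.decRel _
  have hHadj : ∀ a b : V, H.Adj a b ↔ G.Adj a b ∧ ¬ bad a b := by
    intro a b; rw [hH]
  have hedegH : ∀ v : V, edeg H v = H.degree v := fun v => by
    rw [edeg, SimpleGraph.degree, SimpleGraph.neighborFinset_def, ← Set.ncard_eq_toFinset_card']
  -- the main per-vertex computation
  have main : ∀ v : V, 1 ≤ edeg H v ∧ (Odd (edeg H v) ↔ v ∈ X) := by
    intro v
    have h3 : 3 ≤ edeg G v := hδ v
    have hiv : idx v < n := hidx_lt v
    have hgetv : ∀ (i : ℕ) (hi : i < n), i = idx v → L[i]'hi = v := by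
      rintro i hi rfl
      exact List.getElem_idxOf hi
    have hn2 : 2 ≤ n := by
      have hecard : (G.neighborFinset v).card = G.degree v := rfl
      have he2 := hedegG v
      obtain ⟨w', hw'⟩ := Finset.card_pos.1 (show 0 < (G.neighborFinset v).card by omega)
      have hadjvw : G.Adj v w' := by rwa [SimpleGraph.mem_neighborFinset] at hw'
      have hne : w' ≠ v := fun h => G.loopless.irrefl v (h ▸ hadjvw)
      have h1 := hidx_lt w'
      have h2 := hidx_lt v
      have : idx w' ≠ idx v := fun hh => hne (hinj _ _ hh)
      omega
    -- H-neighborhood as a filtered G-neighborhood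
    have hnbr : H.neighborFinset v = (G.neighborFinset v).filter (fun w => ¬ bad v w) := by
      ext w
      simp only [SimpleGraph.mem_neighborFinset, Finset.mem_filter, hHadj]
    set r : ℕ := ((G.neighborFinset v).filter (fun w => bad v w)).card with hr
    have hsum : r + edeg H v = edeg G v := by
      rw [hedegH v, hedegG v, SimpleGraph.degree, SimpleGraph.degree, hnbr]
      exact Finset.card_filter_add_card_filter_not _
    -- split into right and left removed edges
    set Br : Finset V :=
      (G.neighborFinset v).filter (fun w => idx w = idx v + 1 ∧ Odd (c (idx v))) with hBr
    set Bl : Finset V :=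
      (G.neighborFinset v).filter (fun w => idx v = idx w + 1 ∧ Odd (c (idx w))) with hBl
    have hsplit : r = Br.card + Bl.card := by
      have hd : Disjoint Br Bl := by
        rw [Finset.disjoint_left]
        intro x hx hx'
        rw [hBr, Finset.mem_filter] at hx
        rw [hBl, Finset.mem_filter] at hx'
        omega
      rw [hr, ← Finset.card_union_of_disjoint hd, hBr, hBl, ← Finset.filter_or]
    have hBrcard : Br.card = if idx v + 1 < n ∧ Odd (c (idx v)) then 1 else 0 := by
      split_ifs with h
      · have hmem1 : (L[idx v + 1]'h.1) ∈ Br := by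
          rw [hBr]
          refine Finset.mem_filter.2 ⟨?_, ?_, h.2⟩
          · rw [SimpleGraph.mem_neighborFinset]
            have hh := hadj (idx v) (idx v + 1) rfl hiv h.1
            rwa [hgetv (idx v) hiv rfl] at hh
          · exact hidxget (idx v + 1) h.1
        have hle : Br.card ≤ 1 := Finset.card_le_one.2 (by
          intro a ha b hb
          rw [hBr, Finset.mem_filter] at ha hb
          exact hinj a b (by omega))
        have hge : 1 ≤ Br.card := Finset.card_pos.2 ⟨_, hmem1⟩
        omega
      · rw [Finset.card_eq_zero, Finset.eq_empty_iff_forall_notMem]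
        intro w hw
        rw [hBr, Finset.mem_filter] at hw
        have hwlt := hidx_lt w
        exact h ⟨by omega, hw.2.2⟩
    have hBlcard : Bl.card = if 1 ≤ idx v ∧ Odd (c (idx v - 1)) then 1 else 0 := by
      split_ifs with h
      · obtain ⟨j, hj⟩ : ∃ j, idx v = j + 1 := ⟨idx v - 1, by omega⟩
        have hjn : j < n := by omega
        have hmem1 : (L[j]'hjn) ∈ Bl := by
          rw [hBl]
          refine Finset.mem_filter.2 ⟨?_, ?_, ?_⟩
          · rw [SimpleGraph.mem_neighborFinset]
            have hh := hadj j (idx v) hj hjn hiv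
            rw [hgetv (idx v) hiv rfl] at hh
            exact hh.symm
          · rw [hidxget j hjn]
            omega
          · rw [hidxget j hjn]
            have hj' : idx v - 1 = j := by omega
            rw [← hj']
            exact h.2
        have hle : Bl.card ≤ 1 := Finset.card_le_one.2 (by
          intro a ha b hb
          rw [hBl, Finset.mem_filter] at ha hb
          exact hinj a b (by omega))
        have hge : 1 ≤ Bl.card := Finset.card_pos.2 ⟨_, hmem1⟩
        omega
      · rw [Finset.card_eq_zero, Finset.eq_empty_iff_forall_notMem]
        intro w hw
        rw [hBl, Finset.mem_filter] at hw
        refine h ⟨by omega, ?_⟩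
        have hj' : idx v - 1 = idx w := by omega
        rw [hj']
        exact hw.2.2
    -- the prefix-count step at v
    have hcstep : c (idx v) = (if 1 ≤ idx v then c (idx v - 1) else 0)
        + (if Yp v then 1 else 0) := by
      have hfc : YF.filter (fun y => idx y ≤ idx v)
          = YF.filter (fun y => (1 ≤ idx v ∧ idx y ≤ idx v - 1) ∨ y = v) := by
        apply Finset.filter_congr
        intro y _
        constructor
        · intro hy
          rcases Nat.lt_or_ge (idx y) (idx v) with hlt | hge
          · exact Or.inl ⟨by omega, by omega⟩
          · exact Or.inr (hinj y v (by omega))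
        · rintro (⟨h1, h2⟩ | rfl)
          · omega
          · exact le_refl _
      have hdisj2 : Disjoint (YF.filter (fun y => 1 ≤ idx v ∧ idx y ≤ idx v - 1))
          (YF.filter (fun y => y = v)) := by
        rw [Finset.disjoint_left]
        intro x hx hx'
        rw [Finset.mem_filter] at hx hx'
        rcases hx' with ⟨-, rfl⟩
        omega
      have hcv : c (idx v) = (YF.filter (fun y => 1 ≤ idx v ∧ idx y ≤ idx v - 1)).card
          + (YF.filter (fun y => y = v)).card := by
        rw [hc]
        simp only
        rw [hfc, Finset.filter_or, Finset.card_union_of_disjoint hdisj2]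
      rw [hcv]
      congr 1
      · split_ifs with h1
        · apply congrArg
          apply Finset.filter_congr
          intro y _
          simp [h1]
        · rw [Finset.card_eq_zero, Finset.eq_empty_iff_forall_notMem]
          intro x hx
          rw [Finset.mem_filter] at hx
          exact h1 hx.2.1
      · rw [Finset.filter_eq' YF v]
        split_ifs with h1 h2 h2
        · rfl
        · exact absurd ((hmemYF v).1 h1) h2
        · exact absurd ((hmemYF v).2 h2) h1
        · rfl
    -- value of r
    have hrval : r = (if idx v + 1 < n ∧ Odd (c (idx v)) then 1 else 0)
        + (if 1 ≤ idx v ∧ Odd (c (idx v - 1)) then 1 else 0) := by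
      rw [hsplit, hBrcard, hBlcard]
    -- parity of r
    have hYv : Odd r ↔ Yp v := by
      rcases Nat.lt_or_ge (idx v + 1) n with hlt | hge
      · rcases Nat.eq_zero_or_pos (idx v) with h0 | h1
        · -- leftmost vertex
          have hstep : c (idx v) = (if Yp v then 1 else 0) := by
            rw [hcstep, if_neg (by omega), Nat.zero_add]
          have hnol : ∀ Q : Prop, ¬ (1 ≤ idx v ∧ Q) := fun Q hq => by omega
          by_cases hy : Yp v
          · have hA : Odd (c (idx v)) := by rw [hstep, if_pos hy]; exact odd_one
            rw [hrval, if_pos ⟨hlt, hA⟩, if_neg (hnol _)]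
            simpa [Nat.odd_iff] using hy
          · have hA : Even (c (idx v)) := by rw [hstep, if_neg hy]; exact Even.zero
            rw [hrval, if_neg (fun hcon => (Nat.not_odd_iff_even.2 hA) hcon.2),
              if_neg (hnol _)]
            simpa [Nat.odd_iff] using hy
        · -- middle vertex
          have hstep : c (idx v) = c (idx v - 1) + (if Yp v then 1 else 0) := by
            rw [hcstep, if_pos (show 1 ≤ idx v from h1)]
          by_cases hy : Yp v
          · rw [if_pos hy] at hstep
            rcases Nat.even_or_odd (c (idx v - 1)) with hB | hB
            · have hA : Odd (c (idx v)) := by rw [hstep]; exact hB.add_one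
              rw [hrval, if_pos ⟨hlt, hA⟩,
                if_neg (fun hcon => (Nat.not_odd_iff_even.2 hB) hcon.2)]
              simpa [Nat.odd_iff] using hy
            · have hA : Even (c (idx v)) := by rw [hstep]; exact hB.add_one
              rw [hrval, if_neg (fun hcon => (Nat.not_odd_iff_even.2 hA) hcon.2),
                if_pos ⟨show 1 ≤ idx v from h1, hB⟩]
              simpa [Nat.odd_iff] using hy
          · rw [if_neg hy, Nat.add_zero] at hstep
            rcases Nat.even_or_odd (c (idx v - 1)) with hB | hB
            · have hA : Even (c (idx v)) := hstep ▸ hB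
              rw [hrval, if_neg (fun hcon => (Nat.not_odd_iff_even.2 hA) hcon.2),
                if_neg (fun hcon => (Nat.not_odd_iff_even.2 hB) hcon.2)]
              simpa [Nat.odd_iff] using hy
            · have hA : Odd (c (idx v)) := hstep ▸ hB
              rw [hrval, if_pos ⟨hlt, hA⟩, if_pos ⟨show 1 ≤ idx v from h1, hB⟩]
              simpa [Nat.odd_iff] using hy
      · -- rightmost vertex
        have h1 : 1 ≤ idx v := by omega
        have hstep : c (idx v) = c (idx v - 1) + (if Yp v then 1 else 0) := by
          rw [hcstep, if_pos (show 1 ≤ idx v from h1)]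
        have hceven : Even (c (idx v)) := by
          have hie : idx v = n - 1 := by omega
          rw [hie, htop]
          exact hYeven
        have hnor : ∀ Q : Prop, ¬ (idx v + 1 < n ∧ Q) := fun Q hq => by omega
        by_cases hy : Yp v
        · have hB : Odd (c (idx v - 1)) := by
            rw [if_pos hy] at hstep
            rcases Nat.even_or_odd (c (idx v - 1)) with hB | hB
            · exfalso
              rw [hstep] at hceven
              exact (Nat.not_odd_iff_even.2 hceven) hB.add_one
            · exact hB
          rw [hrval, if_neg (hnor _), if_pos ⟨show 1 ≤ idx v from h1, hB⟩]
          simpa [Nat.odd_iff] using hy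
        · have hB : Even (c (idx v - 1)) := by
            rw [if_neg hy, Nat.add_zero] at hstep
            rwa [hstep] at hceven
          rw [hrval, if_neg (hnor _),
            if_neg (fun hcon => (Nat.not_odd_iff_even.2 hB) hcon.2)]
          simpa [Nat.odd_iff] using hy
    -- conclude
    have hr2 : r ≤ 2 := by rw [hrval]; split_ifs <;> omega
    constructor
    · omega
    · rw [hYp] at hYv
      simp only at hYv
      by_cases hvX : v ∈ X
      · simp only [hvX, iff_true, not_true_eq_false, iff_false, not_not] at hYv ⊢
        simp only [Nat.odd_iff] at hYv ⊢
        omega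
      · simp only [hvX, iff_false, not_not, iff_true] at hYv ⊢
        simp only [Nat.odd_iff] at hYv ⊢
        omega
  exact ⟨H, ⟨⟨fun a b hab => hab.1, fun v => (main v).1⟩, fun v => (main v).2⟩⟩
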